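/- arXiv:2603.19663 — 2 statements merged into one kernel-verified Lean document; each statement's English description precedes it below -/
import Mathlib

section
/- Let N ≥ 1 be an integer, D_u, D_v, λ > 0, q ≥ 1 and −N/2 ≤ κ < 0, and set ρ(r) = r^{N−1} e^{r²/(4D_v)}. Let φ : [0,∞) → ℝ be a positive C² solution of D_v (ρ φ')' = κ ρ φ + λ ρ e^{−r²/(4D_u)} φ^q on (0,∞) with φ(0) = 1, φ'(0) = 0, and assume there exist constants C₁, C₂ > 0 and r₂ > 1 such that C₁ r^{2κ−1/8} < φ(r) < C₂ r^{2κ+1/8} and φ'(r) < 0 for all r ≥ r₂. Then there exist C* > 0 and R > 0 such that φ(r) ≥ C* r^{2κ} for all r ≥ R. -/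
open Real Set Filter Topology

set_option maxHeartbeats 1000000
/-- Let `φ` be a positive C² global solution of the profile equation with
`−N/2 ≤ κ < 0`, satisfying the sandwich bounds
`C₁ r^{2κ−1/8} < φ(r) < C₂ r^{2κ+1/8}` and `φ'(r) < 0` for `r ≥ r₂ > 1`. Then there
are `C* > 0` and `R > 0` with `φ(r) ≥ C* r^{2κ}` for all `r ≥ R`. -/
theorem stmt16
    (N : ℕ) (hN : 1 ≤ N) (Du Dv lam q κ : ℝ)
    (hDu : 0 < Du) (hDv : 0 < Dv) (hlam : 0 < lam) (hq : 1 ≤ q)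
    (hκ₁ : -(N : ℝ) / 2 ≤ κ) (hκ₂ : κ < 0)
    (ρ : ℝ → ℝ) (hρ : ∀ r : ℝ, ρ r = r ^ (N - 1) * Real.exp (r ^ 2 / (4 * Dv)))
    (φ dφ : ℝ → ℝ)
    (hpos : ∀ r ∈ Ici (0:ℝ), 0 < φ r)
    (hφ' : ∀ r ∈ Ici (0:ℝ), HasDerivWithinAt φ (dφ r) (Ici 0) r)
    (hODE : ∀ r ∈ Ioi (0:ℝ), HasDerivAt (fun s => Dv * (ρ s * dφ s))
      (κ * ρ r * φ r + lam * ρ r * Real.exp (-(r ^ 2) / (4 * Du)) * φ r ^ q) r)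
    (hφ0 : φ 0 = 1) (hdφ0 : dφ 0 = 0)
    (C₁ C₂ r₂ : ℝ) (hC₁ : 0 < C₁) (hC₂ : 0 < C₂) (hr₂ : 1 < r₂)
    (hlow : ∀ r : ℝ, r₂ ≤ r → C₁ * r ^ (2 * κ - 1/8) < φ r)
    (hup : ∀ r : ℝ, r₂ ≤ r → φ r < C₂ * r ^ (2 * κ + 1/8))
    (hdec : ∀ r : ℝ, r₂ ≤ r → dφ r < 0) :
    ∃ Cstar > 0, ∃ R > 0, ∀ r : ℝ, R ≤ r → Cstar * r ^ (2 * κ) ≤ φ r := by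
  have hDv0 : Dv ≠ 0 := ne_of_gt hDv
  -- scalar abbreviations
  obtain ⟨c, hcdef⟩ : ∃ y : ℝ, y = (N : ℝ) - 1 := ⟨_, rfl⟩
  obtain ⟨m, hmdef⟩ : ∃ y : ℝ, y = 2*κ - 1 + c := ⟨_, rfl⟩
  obtain ⟨M, hMdef⟩ : ∃ y : ℝ, y = max 0 (2*κ*m) := ⟨_, rfl⟩
  obtain ⟨A, hAdef⟩ : ∃ y : ℝ, y = 4*Dv*(M*C₂) := ⟨_, rfl⟩
  obtain ⟨a, hadef⟩ : ∃ y : ℝ, y = c + 4*κ := ⟨_, rfl⟩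
  obtain ⟨B, hBdef⟩ : ∃ y : ℝ, y = m - 1 + (2*κ + 1/8) := ⟨_, rfl⟩
  have hc0 : 0 ≤ c := by
    have : (1:ℝ) ≤ (N:ℝ) := by exact_mod_cast hN
    rw [hcdef]; linarith
  have hM0 : 0 ≤ M := by rw [hMdef]; exact le_max_left _ _
  have hA0 : 0 ≤ A := by
    have h1 : 0 ≤ M * C₂ := mul_nonneg hM0 hC₂.le
    rw [hAdef]; nlinarith
  obtain ⟨s₀, hs₀def⟩ : ∃ y : ℝ, y = r₂ + Real.sqrt (4*Dv*(|B - 1| + |a + 1|)) := ⟨_, rfl⟩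
  have hsqrt0 : 0 ≤ Real.sqrt (4*Dv*(|B - 1| + |a + 1|)) := Real.sqrt_nonneg _
  have hs₀r₂ : r₂ ≤ s₀ := by rw [hs₀def]; linarith
  have hs₀1 : 1 < s₀ := lt_of_lt_of_le hr₂ hs₀r₂
  have hs₀pos : 0 < s₀ := by linarith
  have hsq : ∀ r : ℝ, s₀ ≤ r → 4*Dv*(|B - 1| + |a + 1|) ≤ r^2 := by
    intro r hr
    have h1 : Real.sqrt (4*Dv*(|B - 1| + |a + 1|)) ≤ r := by
      rw [hs₀def] at hr; linarith
    have h0 : 0 ≤ 4*Dv*(|B - 1| + |a + 1|) := by positivity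
    nlinarith [Real.sq_sqrt h0, Real.sqrt_nonneg (4*Dv*(|B - 1| + |a + 1|))]
  -- rho in rpow form
  have hρr : ∀ r : ℝ, 0 < r → ρ r = r ^ c * Real.exp (r^2/(4*Dv)) := by
    intro r hr
    rw [hρ r, hcdef]
    congr 1
    rw [← Real.rpow_natCast r (N-1), Nat.cast_sub hN, Nat.cast_one]
  have hρpos : ∀ r : ℝ, 0 < r → 0 < ρ r := by
    intro r hr
    rw [hρr r hr]
    positivity
  -- derivative facts
  have hφat : ∀ r : ℝ, 0 < r → HasDerivAt φ (dφ r) r := fun r hr =>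
    (hφ' r (le_of_lt hr)).hasDerivAt (Ici_mem_nhds hr)
  have hexpP : ∀ r : ℝ, HasDerivAt (fun s : ℝ => Real.exp (s^2/(4*Dv)))
      (r/(2*Dv) * Real.exp (r^2/(4*Dv))) r := by
    intro r
    have h := ((hasDerivAt_pow 2 r).div_const (4*Dv)).exp
    convert h using 1
    norm_num
    ring
  have hexpN : ∀ r : ℝ, HasDerivAt (fun s : ℝ => Real.exp (-(s^2)/(4*Dv)))
      (-(r/(2*Dv)) * Real.exp (-(r^2)/(4*Dv))) r := by
    intro r
    have h := (((hasDerivAt_pow 2 r).neg).div_const (4*Dv)).exp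
    convert h using 1
    simp only [Pi.neg_apply]
    norm_num
    ring
  have hu : ∀ r : ℝ, 0 < r → HasDerivAt (fun s => ρ s * dφ s)
      ((κ * ρ r * φ r + lam * ρ r * Real.exp (-(r ^ 2) / (4 * Du)) * φ r ^ q)/Dv) r := by
    intro r hr
    have h := (hODE r hr).const_mul (1/Dv)
    have hfe : (fun s => (1/Dv) * (Dv * (ρ s * dφ s))) = fun s => ρ s * dφ s := by
      funext s; field_simp
    rw [hfe] at h
    refine h.congr_deriv ?_
    ring
  -- the energy function H and its derivative W
  have hH : ∀ r : ℝ, 0 < r → HasDerivAt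
      (fun s : ℝ => s ^ (2*κ) * (ρ s * dφ s) - 2*κ * (s ^ m * Real.exp (s^2/(4*Dv)) * φ s))
      (lam/Dv * (r ^ (2*κ) * ρ r * Real.exp (-(r^2)/(4*Du)) * φ r ^ q)
        - 2*κ*m * (r ^ (m-1) * Real.exp (r^2/(4*Dv)) * φ r)) r := by
    intro r hr
    have h2 : HasDerivAt (fun s : ℝ => s ^ (2*κ)) (2*κ * r ^ (2*κ - 1)) r :=
      Real.hasDerivAt_rpow_const (Or.inl (ne_of_gt hr))
    have h3 : HasDerivAt (fun s : ℝ => s ^ m) (m * r ^ (m - 1)) r :=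
      Real.hasDerivAt_rpow_const (Or.inl (ne_of_gt hr))
    have h := (h2.mul (hu r hr)).sub (((h3.mul (hexpP r)).mul (hφat r hr)).const_mul (2*κ))
    refine h.congr_deriv ?_
    symm
    simp only [Pi.mul_apply]
    rw [hρr r hr]
    have e1 : r ^ (2*κ - 1) = r ^ (2*κ) / r := by
      rw [Real.rpow_sub hr, Real.rpow_one]
    have em : r ^ m = r ^ (2*κ) * r ^ c / r := by
      rw [hmdef, show 2*κ - 1 + c = (2*κ + c) - 1 by ring, Real.rpow_sub hr,
        Real.rpow_add hr, Real.rpow_one]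
    have e2 : r ^ (m - 1) = r ^ (2*κ) * r ^ c / r / r := by
      rw [Real.rpow_sub hr, Real.rpow_one, em]
    rw [e1, e2, em]
    have hrne : r ≠ 0 := ne_of_gt hr
    field_simp
    ring
  -- derivative of the correction ψ
  have hψ : ∀ r : ℝ, 0 < r → HasDerivAt
      (fun s : ℝ => A * (s ^ (B-1) * Real.exp (s^2/(4*Dv))))
      (A * ((B-1) * r ^ (B-1-1) * Real.exp (r^2/(4*Dv))
        + r ^ (B-1) * (r/(2*Dv) * Real.exp (r^2/(4*Dv))))) r := by
    intro r hr
    have h1 : HasDerivAt (fun s : ℝ => s ^ (B-1)) ((B-1) * r ^ (B-1-1)) r :=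
      Real.hasDerivAt_rpow_const (Or.inl (ne_of_gt hr))
    exact (h1.mul (hexpP r)).const_mul A
  -- lower bound for W
  have hWlow : ∀ r : ℝ, s₀ ≤ r →
      -(M*C₂*(r ^ (B-1) * r * Real.exp (r^2/(4*Dv))))
        ≤ lam/Dv * (r ^ (2*κ) * ρ r * Real.exp (-(r^2)/(4*Du)) * φ r ^ q)
          - 2*κ*m * (r ^ (m-1) * Real.exp (r^2/(4*Dv)) * φ r) := by
    intro r hr
    have hr0 : 0 < r := lt_of_lt_of_le hs₀pos hr
    have hrr₂ : r₂ ≤ r := le_trans hs₀r₂ hr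
    have hE : (0:ℝ) < Real.exp (r^2/(4*Dv)) := Real.exp_pos _
    have hP : 0 < φ r := hpos r (mem_Ici.mpr hr0.le)
    have hρp : 0 < ρ r := hρpos r hr0
    have hlam0 : 0 ≤ lam/Dv * (r ^ (2*κ) * ρ r * Real.exp (-(r^2)/(4*Du)) * φ r ^ q) := by
      have h1 : (0:ℝ) < φ r ^ q := Real.rpow_pos_of_pos hP q
      have h2 : (0:ℝ) < r ^ (2*κ) := Real.rpow_pos_of_pos hr0 _
      positivity
    have hκm : 2*κ*m ≤ M := by rw [hMdef]; exact le_max_right _ _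
    have hφub : φ r < C₂ * r ^ (2*κ + 1/8) := hup r hrr₂
    have hT0 : (0:ℝ) < r ^ (m-1) := Real.rpow_pos_of_pos hr0 _
    have hBm : r ^ (B-1) * r = r ^ (m-1) * r ^ (2*κ + 1/8) := by
      rw [show r ^ (B-1) * r = r ^ (B-1) * r ^ (1:ℝ) by rw [Real.rpow_one],
        ← Real.rpow_add hr0, ← Real.rpow_add hr0]
      congr 1
      rw [hBdef]; ring
    have key : 2*κ*m * (r ^ (m-1) * Real.exp (r^2/(4*Dv)) * φ r)
        ≤ M*C₂*(r ^ (B-1) * r * Real.exp (r^2/(4*Dv))) := by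
      rw [hBm]
      calc 2*κ*m * (r ^ (m-1) * Real.exp (r^2/(4*Dv)) * φ r)
          ≤ M * (r ^ (m-1) * Real.exp (r^2/(4*Dv)) * φ r) := by
            apply mul_le_mul_of_nonneg_right hκm (by positivity)
        _ ≤ M * (r ^ (m-1) * Real.exp (r^2/(4*Dv)) * (C₂ * r ^ (2*κ + 1/8))) := by
            apply mul_le_mul_of_nonneg_left ?_ hM0
            apply mul_le_mul_of_nonneg_left hφub.le (by positivity)
        _ = M*C₂*(r ^ (m-1) * r ^ (2*κ + 1/8) * Real.exp (r^2/(4*Dv))) := by ring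
    linarith
  -- lower bound for ψ'
  have hψdlow : ∀ r : ℝ, s₀ ≤ r →
      M*C₂*(r ^ (B-1) * r * Real.exp (r^2/(4*Dv)))
        ≤ A * ((B-1) * r ^ (B-1-1) * Real.exp (r^2/(4*Dv))
            + r ^ (B-1) * (r/(2*Dv) * Real.exp (r^2/(4*Dv)))) := by
    intro r hr
    have hr0 : 0 < r := lt_of_lt_of_le hs₀pos hr
    have hE : (0:ℝ) < Real.exp (r^2/(4*Dv)) := Real.exp_pos _
    have hT : (0:ℝ) < r ^ (B-1) := Real.rpow_pos_of_pos hr0 _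
    have hrr : 4*Dv*(|B - 1| + |a + 1|) ≤ r*r := by
      have := hsq r hr
      nlinarith [sq_nonneg r]
    have e1 : r ^ (B-1-1) = r ^ (B-1) / r := by rw [Real.rpow_sub hr0, Real.rpow_one]
    rw [e1]
    have base : M*C₂*(r*r) ≤ A*(B-1) + A*(r*r)/(2*Dv) := by
      have hMC : 0 ≤ M*C₂ := mul_nonneg hM0 hC₂.le
      have h1 : -(A*|B-1|) ≤ A*(B-1) := by
        nlinarith [neg_abs_le (B-1), hA0]
      have h2 : A*|B-1| ≤ M*C₂*(r*r) := by
        rw [hAdef]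
        nlinarith [abs_nonneg (a+1), abs_nonneg (B-1), hDv, hMC,
          mul_le_mul_of_nonneg_left hrr hMC]
      have h3 : A*(r*r)/(2*Dv) = 2*(M*C₂*(r*r)) := by
        rw [hAdef]; field_simp; ring
      linarith
    have hTE : (0:ℝ) ≤ r ^ (B-1) * Real.exp (r^2/(4*Dv)) / r := by positivity
    have hmul := mul_le_mul_of_nonneg_right base hTE
    have hrne : r ≠ 0 := ne_of_gt hr0
    have eL : M*C₂*(r*r) * (r ^ (B-1) * Real.exp (r^2/(4*Dv)) / r)
        = M*C₂*(r ^ (B-1) * r * Real.exp (r^2/(4*Dv))) := by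
      field_simp
    have eR : (A*(B-1) + A*(r*r)/(2*Dv)) * (r ^ (B-1) * Real.exp (r^2/(4*Dv)) / r)
        = A*((B-1) * (r ^ (B-1) / r) * Real.exp (r^2/(4*Dv))
            + r ^ (B-1) * (r/(2*Dv) * Real.exp (r^2/(4*Dv)))) := by
      field_simp
    rw [eL, eR] at hmul
    exact hmul
  -- H + ψ is monotone on [s₀, ∞)
  have hmono1 : MonotoneOn
      (fun s : ℝ => (s ^ (2*κ) * (ρ s * dφ s) - 2*κ * (s ^ m * Real.exp (s^2/(4*Dv)) * φ s))
        + A * (s ^ (B-1) * Real.exp (s^2/(4*Dv)))) (Ici s₀) := by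
    apply monotoneOn_of_hasDerivWithinAt_nonneg (convex_Ici s₀)
      (f' := fun r => (lam/Dv * (r ^ (2*κ) * ρ r * Real.exp (-(r^2)/(4*Du)) * φ r ^ q)
        - 2*κ*m * (r ^ (m-1) * Real.exp (r^2/(4*Dv)) * φ r))
        + A * ((B-1) * r ^ (B-1-1) * Real.exp (r^2/(4*Dv))
            + r ^ (B-1) * (r/(2*Dv) * Real.exp (r^2/(4*Dv)))))
    · intro x hx
      have hx0 : 0 < x := lt_of_lt_of_le hs₀pos hx
      exact ((hH x hx0).add (hψ x hx0)).continuousAt.continuousWithinAt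
    · intro x hx
      rw [interior_Ici] at hx
      have hx0 : 0 < x := lt_trans hs₀pos hx
      exact ((hH x hx0).add (hψ x hx0)).hasDerivWithinAt
    · intro x hx
      rw [interior_Ici] at hx
      have h1 := hWlow x (le_of_lt hx)
      have h2 := hψdlow x (le_of_lt hx)
      linarith
  set K0 : ℝ := (s₀ ^ (2*κ) * (ρ s₀ * dφ s₀) - 2*κ * (s₀ ^ m * Real.exp (s₀^2/(4*Dv)) * φ s₀))
    + A * (s₀ ^ (B-1) * Real.exp (s₀^2/(4*Dv))) with hK0def
  have hK1 : ∀ r : ℝ, s₀ ≤ r →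
      K0 - A * (r ^ (B-1) * Real.exp (r^2/(4*Dv)))
        ≤ r ^ (2*κ) * (ρ r * dφ r) - 2*κ * (r ^ m * Real.exp (r^2/(4*Dv)) * φ r) := by
    intro r hr
    have := hmono1 (self_mem_Ici) (show r ∈ Ici s₀ from hr) hr
    rw [hK0def]
    linarith
  obtain ⟨c₁, hc₁def⟩ : ∃ y : ℝ, y = 4*Dv*|K0| := ⟨_, rfl⟩
  obtain ⟨c₂, hc₂def⟩ : ∃ y : ℝ, y = 8/15*A := ⟨_, rfl⟩
  have hc₁0 : 0 ≤ c₁ := by rw [hc₁def]; positivity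
  have hc₂0 : 0 ≤ c₂ := by rw [hc₂def]; linarith
  -- lower bound for the derivative of g(r) = r^{-2κ} φ(r)
  have hGlow : ∀ r : ℝ, s₀ ≤ r →
      -(|K0| * (r ^ (-a) * Real.exp (-(r^2)/(4*Dv)))) - A * r ^ ((-23)/8 : ℝ)
        ≤ -(2*κ) * r ^ (-(2*κ) - 1) * φ r + r ^ (-(2*κ)) * dφ r := by
    intro r hr
    have hr0 : 0 < r := lt_of_lt_of_le hs₀pos hr
    have hσ : (0:ℝ) < r ^ a * Real.exp (r^2/(4*Dv)) := by
      have := Real.rpow_pos_of_pos hr0 a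
      positivity
    have hid : (r ^ a * Real.exp (r^2/(4*Dv)))
          * (-(2*κ) * r ^ (-(2*κ) - 1) * φ r + r ^ (-(2*κ)) * dφ r)
        = r ^ (2*κ) * (ρ r * dφ r) - 2*κ * (r ^ m * Real.exp (r^2/(4*Dv)) * φ r) := by
      rw [hρr r hr0]
      have q1 : r ^ a * r ^ (-(2*κ) - 1) = r ^ m := by
        rw [← Real.rpow_add hr0]; congr 1; rw [hadef, hmdef]; ring
      have q2 : r ^ a * r ^ (-(2*κ)) = r ^ m * r := by
        rw [← Real.rpow_add hr0, show a + -(2*κ) = m + 1 by rw [hadef, hmdef]; ring,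
          Real.rpow_add hr0, Real.rpow_one]
      have q3 : r ^ (2*κ) * r ^ c = r ^ m * r := by
        rw [← Real.rpow_add hr0, show 2*κ + c = m + 1 by rw [hmdef]; ring,
          Real.rpow_add hr0, Real.rpow_one]
      linear_combination (Real.exp (r^2/(4*Dv)) * φ r * (-(2*κ))) * q1
        + (Real.exp (r^2/(4*Dv)) * dφ r) * q2 - (Real.exp (r^2/(4*Dv)) * dφ r) * q3
    have hK := hK1 r hr
    have hdiv : (K0 - A * (r ^ (B-1) * Real.exp (r^2/(4*Dv)))) / (r ^ a * Real.exp (r^2/(4*Dv)))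
        ≤ -(2*κ) * r ^ (-(2*κ) - 1) * φ r + r ^ (-(2*κ)) * dφ r := by
      rw [div_le_iff₀ hσ]
      nlinarith [hK, hid]
    have hinv : r ^ (-a) * Real.exp (-(r^2)/(4*Dv)) = (r ^ a * Real.exp (r^2/(4*Dv)))⁻¹ := by
      rw [Real.rpow_neg hr0.le, neg_div, Real.exp_neg, mul_inv]
    have hψσ : A * (r ^ (B-1) * Real.exp (r^2/(4*Dv))) / (r ^ a * Real.exp (r^2/(4*Dv)))
        = A * r ^ ((-23)/8 : ℝ) := by
      rw [div_eq_iff (ne_of_gt hσ)]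
      have hsplit : r ^ (B-1) = r ^ ((-23)/8 : ℝ) * r ^ a := by
        rw [← Real.rpow_add hr0]; congr 1; rw [hBdef, hmdef, hadef]; ring
      rw [hsplit]; ring
    have h5 : -|K0| / (r ^ a * Real.exp (r^2/(4*Dv))) ≤ K0 / (r ^ a * Real.exp (r^2/(4*Dv))) :=
      (div_le_div_iff_of_pos_right hσ).mpr (neg_abs_le K0)
    have h6 : -(|K0| * (r ^ (-a) * Real.exp (-(r^2)/(4*Dv))))
        = -|K0| / (r ^ a * Real.exp (r^2/(4*Dv))) := by
      rw [hinv, div_eq_mul_inv]; ring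
    have h7 : (K0 - A * (r ^ (B-1) * Real.exp (r^2/(4*Dv)))) / (r ^ a * Real.exp (r^2/(4*Dv)))
        = K0 / (r ^ a * Real.exp (r^2/(4*Dv)))
          - A * (r ^ (B-1) * Real.exp (r^2/(4*Dv))) / (r ^ a * Real.exp (r^2/(4*Dv))) :=
      sub_div _ _ _
    linarith
  -- upper bound for the derivative of the correction ζ
  have hζdup : ∀ r : ℝ, s₀ ≤ r →
      c₁ * ((-a-1) * r ^ (-a-1-1) * Real.exp (-(r^2)/(4*Dv))
          + r ^ (-a-1) * (-(r/(2*Dv)) * Real.exp (-(r^2)/(4*Dv))))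
        + c₂ * ((-15)/8 * r ^ ((-15)/8 - 1 : ℝ))
        ≤ -(|K0| * (r ^ (-a) * Real.exp (-(r^2)/(4*Dv)))) - A * r ^ ((-23)/8 : ℝ) := by
    intro r hr
    have hr0 : 0 < r := lt_of_lt_of_le hs₀pos hr
    have hrne : r ≠ 0 := ne_of_gt hr0
    have hE : (0:ℝ) < Real.exp (-(r^2)/(4*Dv)) := Real.exp_pos _
    have hu0 : (0:ℝ) < r ^ (-a) := Real.rpow_pos_of_pos hr0 _
    have hrr : 4*Dv*(|B - 1| + |a + 1|) ≤ r*r := by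
      have := hsq r hr
      nlinarith [sq_nonneg r]
    have h2nd : c₂ * ((-15)/8 * r ^ ((-15)/8 - 1 : ℝ)) = -(A * r ^ ((-23)/8 : ℝ)) := by
      rw [show ((-15)/8 - 1 : ℝ) = (-23)/8 by norm_num, hc₂def]
      ring
    have q1 : r ^ (-a-1-1 : ℝ) = r ^ (-a) / (r*r) := by
      rw [show (-a-1-1 : ℝ) = -a - (1+1) by ring, Real.rpow_sub hr0,
        Real.rpow_add hr0, Real.rpow_one]
    have q2 : r ^ (-a-1 : ℝ) = r ^ (-a) / r := by
      rw [Real.rpow_sub hr0, Real.rpow_one]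
    have base : c₁ * ((-a-1)/(r*r) - 1/(2*Dv)) ≤ -|K0| := by
      have h1 : c₁ * ((-a-1)/(r*r)) ≤ |K0| := by
        rw [mul_div_assoc', div_le_iff₀ (by positivity : (0:ℝ) < r*r), hc₁def]
        nlinarith [neg_abs_le (a+1), abs_nonneg (a+1), abs_nonneg (B-1), abs_nonneg K0,
          hDv, mul_le_mul_of_nonneg_left hrr (abs_nonneg K0),
          mul_nonneg (abs_nonneg K0) (abs_nonneg (B-1)),
          mul_nonneg (mul_nonneg hDv.le (abs_nonneg K0)) (abs_nonneg (B-1))]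
      have h2 : c₁ * (1/(2*Dv)) = 2*|K0| := by rw [hc₁def]; field_simp; ring
      have h3 : c₁ * ((-a-1)/(r*r) - 1/(2*Dv))
          = c₁ * ((-a-1)/(r*r)) - c₁ * (1/(2*Dv)) := by ring
      linarith
    have hmul := mul_le_mul_of_nonneg_right base (mul_nonneg hu0.le hE.le)
    have eL : c₁ * ((-a-1)/(r*r) - 1/(2*Dv)) * (r ^ (-a) * Real.exp (-(r^2)/(4*Dv)))
        = c₁ * ((-a-1) * r ^ (-a-1-1) * Real.exp (-(r^2)/(4*Dv))
            + r ^ (-a-1) * (-(r/(2*Dv)) * Real.exp (-(r^2)/(4*Dv)))) := by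
      rw [q1, q2]; field_simp; ring
    have eR : -|K0| * (r ^ (-a) * Real.exp (-(r^2)/(4*Dv)))
        = -(|K0| * (r ^ (-a) * Real.exp (-(r^2)/(4*Dv)))) := by ring
    rw [eL, eR] at hmul
    linarith
  -- derivative of Phi
  have hPhiD : ∀ x : ℝ, 0 < x → HasDerivAt
      (fun s : ℝ => s ^ (-(2*κ)) * φ s
        - (c₁ * (s ^ (-a-1) * Real.exp (-(s^2)/(4*Dv))) + c₂ * s ^ ((-15)/8 : ℝ)))
      ((-(2*κ) * x ^ (-(2*κ) - 1) * φ x + x ^ (-(2*κ)) * dφ x)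
        - (c₁ * ((-a-1) * x ^ (-a-1-1) * Real.exp (-(x^2)/(4*Dv))
            + x ^ (-a-1) * (-(x/(2*Dv)) * Real.exp (-(x^2)/(4*Dv))))
          + c₂ * ((-15)/8 * x ^ ((-15)/8 - 1 : ℝ)))) x := by
    intro x hx
    have h1 : HasDerivAt (fun s : ℝ => s ^ (-(2*κ))) (-(2*κ) * x ^ (-(2*κ) - 1)) x :=
      Real.hasDerivAt_rpow_const (Or.inl (ne_of_gt hx))
    have h2 : HasDerivAt (fun s : ℝ => s ^ (-a-1)) ((-a-1) * x ^ (-a-1-1)) x :=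
      Real.hasDerivAt_rpow_const (Or.inl (ne_of_gt hx))
    have h3 : HasDerivAt (fun s : ℝ => s ^ ((-15)/8 : ℝ)) ((-15)/8 * x ^ ((-15)/8 - 1 : ℝ)) x :=
      Real.hasDerivAt_rpow_const (Or.inl (ne_of_gt hx))
    exact (h1.mul (hφat x hx)).sub
      (((h2.mul (hexpN x)).const_mul c₁).add (h3.const_mul c₂))
  -- Phi = g - zeta is monotone
  have hmono2 : MonotoneOn
      (fun s : ℝ => s ^ (-(2*κ)) * φ s
        - (c₁ * (s ^ (-a-1) * Real.exp (-(s^2)/(4*Dv))) + c₂ * s ^ ((-15)/8 : ℝ))) (Ici s₀) := by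
    apply monotoneOn_of_hasDerivWithinAt_nonneg (convex_Ici s₀)
      (f' := fun r => (-(2*κ) * r ^ (-(2*κ) - 1) * φ r + r ^ (-(2*κ)) * dφ r)
        - (c₁ * ((-a-1) * r ^ (-a-1-1) * Real.exp (-(r^2)/(4*Dv))
            + r ^ (-a-1) * (-(r/(2*Dv)) * Real.exp (-(r^2)/(4*Dv))))
          + c₂ * ((-15)/8 * r ^ ((-15)/8 - 1 : ℝ))))
    · intro x hx
      have hx0 : 0 < x := lt_of_lt_of_le hs₀pos hx
      exact (hPhiD x hx0).continuousAt.continuousWithinAt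
    · intro x hx
      rw [interior_Ici] at hx
      have hx0 : 0 < x := lt_trans hs₀pos hx
      exact (hPhiD x hx0).hasDerivWithinAt
    · intro x hx
      rw [interior_Ici] at hx
      have h1 := hGlow x (le_of_lt hx)
      have h2 := hζdup x (le_of_lt hx)
      linarith
    -- choose R large
  have hzeta_small : ∀ᶠ R in atTop, R ^ ((1:ℝ)/8) *
      (c₁ * (R ^ (-a-1) * Real.exp (-(R^2)/(4*Dv))) + c₂ * R ^ ((-15)/8 : ℝ)) < C₁/2 := by
    have hb : (0:ℝ) < 1/(4*Dv) := by positivity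
    have T1 : Tendsto (fun R : ℝ => R ^ (-a-(7:ℝ)/8) * Real.exp (-(R^2)/(4*Dv))) atTop (𝓝 0) := by
      have h0 := tendsto_rpow_mul_exp_neg_mul_atTop_nhds_zero ((-a-(7:ℝ)/8)/2) (1/(4*Dv)) hb
      have h2 : Tendsto (fun R : ℝ => R^2) atTop atTop :=
        tendsto_pow_atTop (by norm_num : (2:ℕ) ≠ 0)
      refine Filter.Tendsto.congr' ?_ (h0.comp h2)
      filter_upwards [eventually_ge_atTop (0:ℝ)] with R hR
      show (R^2) ^ ((-a-(7:ℝ)/8)/2) * Real.exp (-(1/(4*Dv)) * R^2) = _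
      congr 1
      · rw [← Real.rpow_natCast R 2, ← Real.rpow_mul hR]
        congr 1
        push_cast
        ring
      · congr 1; ring
    have T2 : Tendsto (fun R : ℝ => R ^ ((-15)/8 + (1:ℝ)/8 : ℝ)) atTop (𝓝 0) := by
      have h := tendsto_rpow_neg_atTop (show (0:ℝ) < 7/4 by norm_num)
      have : ((-15)/8 + (1:ℝ)/8 : ℝ) = -(7/4) := by norm_num
      rw [this]
      exact h
    have T3 : Tendsto (fun R : ℝ => c₁ * (R ^ (-a-(7:ℝ)/8) * Real.exp (-(R^2)/(4*Dv)))
        + c₂ * R ^ ((-15)/8 + (1:ℝ)/8 : ℝ)) atTop (𝓝 0) := by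
      have := (T1.const_mul c₁).add (T2.const_mul c₂)
      simpa using this
    have T4 := T3.eventually (gt_mem_nhds (by positivity : (0:ℝ) < C₁/2))
    filter_upwards [T4, eventually_gt_atTop (0:ℝ)] with R hRlt hR0
    have p1 : R ^ ((1:ℝ)/8) * R ^ (-a-1 : ℝ) = R ^ (-a-(7:ℝ)/8) := by
      rw [← Real.rpow_add hR0]; congr 1; ring
    have p2 : R ^ ((1:ℝ)/8) * R ^ ((-15)/8 : ℝ) = R ^ ((-15)/8 + (1:ℝ)/8 : ℝ) := by
      rw [← Real.rpow_add hR0]; congr 1; ring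
    have e1 : R ^ ((1:ℝ)/8) * (c₁ * (R ^ (-a-1) * Real.exp (-(R^2)/(4*Dv)))
          + c₂ * R ^ ((-15)/8 : ℝ))
        = c₁ * (R ^ (-a-(7:ℝ)/8) * Real.exp (-(R^2)/(4*Dv)))
          + c₂ * R ^ ((-15)/8 + (1:ℝ)/8 : ℝ) := by
      linear_combination (c₁ * Real.exp (-(R^2)/(4*Dv))) * p1 + c₂ * p2
    rw [e1]
    exact hRlt
  obtain ⟨R, hRprop⟩ := (hzeta_small.and (eventually_ge_atTop (max s₀ 1))).exists
  obtain ⟨hRsmall, hRge⟩ := hRprop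
  have hRs₀ : s₀ ≤ R := le_trans (le_max_left _ _) hRge
  have hR1 : (1:ℝ) ≤ R := le_trans (le_max_right _ _) hRge
  have hR0 : 0 < R := lt_of_lt_of_le one_pos hR1
  refine ⟨C₁/2 * R ^ (-(1:ℝ)/8), by positivity, R, hR0, ?_⟩
  intro r hrR
  have hr0 : 0 < r := lt_of_lt_of_le hR0 hrR
  have hmR := hmono2 (show R ∈ Ici s₀ from hRs₀) (show r ∈ Ici s₀ from le_trans hRs₀ hrR) hrR
  simp only at hmR
  have hζr : 0 ≤ c₁ * (r ^ (-a-1) * Real.exp (-(r^2)/(4*Dv))) + c₂ * r ^ ((-15)/8 : ℝ) := by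
    have h1 : (0:ℝ) < r ^ (-a-1) := Real.rpow_pos_of_pos hr0 _
    have h2 : (0:ℝ) < r ^ ((-15)/8 : ℝ) := Real.rpow_pos_of_pos hr0 _
    have h3 : (0:ℝ) < Real.exp (-(r^2)/(4*Dv)) := Real.exp_pos _
    have := mul_nonneg hc₁0 (mul_nonneg h1.le h3.le)
    have := mul_nonneg hc₂0 h2.le
    linarith
  have hgR : C₁ * R ^ (-(1:ℝ)/8) ≤ R ^ (-(2*κ)) * φ R := by
    have h1 := hlow R (le_trans hs₀r₂ hRs₀)
    have h2 : (0:ℝ) < R ^ (-(2*κ)) := Real.rpow_pos_of_pos hR0 _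
    have h3 : R ^ (-(2*κ)) * (C₁ * R ^ (2*κ - 1/8)) = C₁ * R ^ (-(1:ℝ)/8) := by
      rw [show R ^ (-(2*κ)) * (C₁ * R ^ (2*κ - 1/8)) = C₁ * (R ^ (-(2*κ)) * R ^ (2*κ - 1/8)) by ring,
        ← Real.rpow_add hR0]
      congr 2
      ring
    have h4 := mul_le_mul_of_nonneg_left h1.le h2.le
    rw [h3] at h4
    exact h4
  have hζR : c₁ * (R ^ (-a-1) * Real.exp (-(R^2)/(4*Dv))) + c₂ * R ^ ((-15)/8 : ℝ)
      ≤ C₁/2 * R ^ (-(1:ℝ)/8) := by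
    have h2 : (0:ℝ) < R ^ (-(1:ℝ)/8) := Real.rpow_pos_of_pos hR0 _
    have h4 : (0:ℝ) < R ^ ((1:ℝ)/8) := Real.rpow_pos_of_pos hR0 _
    have h3 : R ^ (-(1:ℝ)/8) * R ^ ((1:ℝ)/8) = 1 := by
      rw [← Real.rpow_add hR0]; norm_num
    have h5 := mul_le_mul_of_nonneg_left hRsmall.le h2.le
    rw [← mul_assoc, h3, one_mul] at h5
    linarith
  have hgr : C₁/2 * R ^ (-(1:ℝ)/8) ≤ r ^ (-(2*κ)) * φ r := by linarith
  have hfin : (C₁/2 * R ^ (-(1:ℝ)/8)) * r ^ (2*κ) ≤ (r ^ (-(2*κ)) * φ r) * r ^ (2*κ) := by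
    have h2 : (0:ℝ) < r ^ (2*κ) := Real.rpow_pos_of_pos hr0 _
    exact mul_le_mul_of_nonneg_right hgr h2.le
  have hid : (r ^ (-(2*κ)) * φ r) * r ^ (2*κ) = φ r := by
    rw [show (r ^ (-(2*κ)) * φ r) * r ^ (2*κ) = (r ^ (-(2*κ)) * r ^ (2*κ)) * φ r by ring,
      ← Real.rpow_add hr0]
    norm_num
  rw [hid] at hfin
  exact hfin
end

section
/- Let N ≥ 1 be an integer, B > 0, κ < −N/2, and let φ : [0,∞) → ℝ be a continuous positive bounded-near-zero function with ∫₀^∞ r^{−2κ−1} φ(r) dr < ∞. For t > 0 define v(x,t) = B t^{κ} φ(|x|/√t) for x ∈ ℝ^N, and set M₁ = B ω_{N−1} ∫₀^∞ r^{−2κ−1} φ(r) dr, where ω_{N−1} is the surface measure of the unit sphere in ℝ^N. Then for every bounded continuous function f : ℝ^N → ℝ, ∫_{ℝ^N} |x|^{−2κ−N} v(x,t) f(x) dx → M₁ f(0) as t → 0⁺; that is, |x|^{−2κ−N} v(x,t) → M₁ δ₀ in the sense of distributions as t → 0⁺ (note −2κ−N > 0, so v itself is more singular at the origin than the fundamental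 solution: v is 'very singular'). -/
open Real Set MeasureTheory Filter Topology

open MeasureTheory Measure in
lemma integrable_fun_norm_addHaar_aux {E : Type*} [NormedAddCommGroup E] [NormedSpace ℝ E]
    [MeasurableSpace E] [BorelSpace E] [FiniteDimensional ℝ E] [Nontrivial E]
    (μ : Measure E) [μ.IsAddHaarMeasure] (g : ℝ → ℝ)
    (h : IntegrableOn (fun y => y ^ (Module.finrank ℝ E - 1) * g y) (Ioi (0:ℝ))) :
    Integrable (fun x => g ‖x‖) μ := by
  set n := Module.finrank ℝ E - 1 with hn
  have h1 : Integrable (fun y : Ioi (0:ℝ) => g y) (volumeIoiPow n) := by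
    rw [volumeIoiPow, integrable_withDensity_iff
      ((measurable_subtype_coe.pow_const _).ennreal_ofReal)
      (Eventually.of_forall fun r => ENNReal.ofReal_lt_top)]
    have : (fun (r : Ioi (0:ℝ)) => g r * (ENNReal.ofReal (r.1 ^ n)).toReal)
        = (fun y : ℝ => y ^ n * g y) ∘ (Subtype.val : Ioi (0:ℝ) → ℝ) := by
      ext r
      simp [ENNReal.toReal_ofReal (pow_nonneg r.2.le n), mul_comm]
    rw [this, ← (MeasurableEmbedding.subtype_coe measurableSet_Ioi).integrable_map_iff,
      map_comap_subtype_coe measurableSet_Ioi]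
    exact h
  have h2 : Integrable (fun p : Metric.sphere (0:E) 1 × Ioi (0:ℝ) => g p.2)
      ((μ.toSphere).prod (volumeIoiPow n)) := by
    have := Integrable.mul_prod
      (integrable_const (1:ℝ) : Integrable (fun _ : Metric.sphere (0:E) 1 => (1:ℝ)) μ.toSphere) h1
    simpa using this
  have h3 : Integrable (fun x : ({0}ᶜ : Set E) => g ‖(x:E)‖) (μ.comap (↑)) := by
    have h3' := (μ.measurePreserving_homeomorphUnitSphereProd.integrable_comp_emb
      (Homeomorph.measurableEmbedding _)
      (g := fun p : Metric.sphere (0:E) 1 × Ioi (0:ℝ) => g p.2)).2 h2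
    convert h3' using 1
    funext x
    simp
  have h4 : Integrable (fun x : E => g ‖x‖) (μ.restrict ({0}ᶜ : Set E)) := by
    rw [← map_comap_subtype_coe (measurableSet_singleton (0:E)).compl,
      (MeasurableEmbedding.subtype_coe (measurableSet_singleton (0:E)).compl).integrable_map_iff]
    exact h3
  rwa [restrict_compl_singleton] at h4

/-- For `κ < −N/2`, the signal component
`v(x,t) = B t^κ φ(|x|/√t)` of the forward self-similar solution is "very singular":
`|x|^{−2κ−N} v(x,t) → M₁ δ₀` in the sense of distributions as `t → 0⁺`, where
`M₁ = B ω_{N−1} ∫₀^∞ r^{−2κ−1} φ(r) dr`. -/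
theorem stmt19
    (N : ℕ) (hN : 1 ≤ N) (B κ : ℝ) (hB : 0 < B) (hκ : κ < -(N : ℝ) / 2)
    (φ : ℝ → ℝ) (hφc : ContinuousOn φ (Ici 0)) (hφpos : ∀ r ∈ Ici (0:ℝ), 0 < φ r)
    (hbdd : ∃ K δ : ℝ, 0 < δ ∧ ∀ r ∈ Icc (0:ℝ) δ, φ r ≤ K)
    (hint : IntegrableOn (fun r => r ^ (-2 * κ - 1) * φ r) (Ioi 0))
    (v : EuclideanSpace ℝ (Fin N) → ℝ → ℝ)
    (hv : ∀ (x : EuclideanSpace ℝ (Fin N)) (t : ℝ), 0 < t →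
      v x t = B * t ^ κ * φ (‖x‖ / Real.sqrt t))
    (ωN M₁ : ℝ)
    (hω : ωN = N * (volume (Metric.ball (0 : EuclideanSpace ℝ (Fin N)) 1)).toReal)
    (hM₁ : M₁ = B * ωN * ∫ r in Ioi (0:ℝ), r ^ (-2 * κ - 1) * φ r) :
    ∀ f : EuclideanSpace ℝ (Fin N) → ℝ, Continuous f → (∃ K, ∀ x, |f x| ≤ K) →
      Tendsto (fun t => ∫ x, ‖x‖ ^ (-2 * κ - (N : ℝ)) * v x t * f x)
        (𝓝[>] (0:ℝ)) (𝓝 (M₁ * f 0)) := by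
  intro f hf hKf
  obtain ⟨K, hK⟩ := hKf
  have hNfin : Module.finrank ℝ (EuclideanSpace ℝ (Fin N)) = N := finrank_euclideanSpace_fin
  haveI hNont : Nontrivial (EuclideanSpace ℝ (Fin N)) := by
    apply Module.finrank_pos_iff (R := ℝ).mp
    rw [hNfin]; exact hN
  set p : ℝ := -2 * κ - (N : ℝ) with hp
  have hp0 : 0 < p := by rw [hp]; linarith
  set g0 : ℝ → ℝ := fun r => r ^ p * φ r with hg0
  set H : EuclideanSpace ℝ (Fin N) → ℝ := fun y => g0 ‖y‖ with hH
  -- key pointwise identity on (0, ∞)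
  have key : ∀ y ∈ Ioi (0:ℝ), (fun y : ℝ => y ^ (N - 1) * g0 y) y
      = (fun y : ℝ => y ^ (-2 * κ - 1) * φ y) y := by
    intro y hy
    have hy0 : (0:ℝ) < y := hy
    simp only [hg0]
    rw [← mul_assoc, ← Real.rpow_natCast y (N - 1), ← Real.rpow_add hy0,
      show ((N - 1 : ℕ) : ℝ) + p = -2 * κ - 1 by
        rw [Nat.cast_sub hN, hp]; push_cast; ring]
  have hgInt : IntegrableOn (fun y : ℝ => y ^ (N - 1) * g0 y) (Ioi (0:ℝ)) :=
    hint.congr_fun (fun y hy => (key y hy).symm) measurableSet_Ioi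
  have hHint : Integrable H volume := by
    apply integrable_fun_norm_addHaar_aux volume g0
    simp only [hNfin]
    exact hgInt
  have hHnn : ∀ y, 0 ≤ H y := fun y =>
    mul_nonneg (Real.rpow_nonneg (norm_nonneg y) p) (hφpos ‖y‖ (norm_nonneg y)).le
  have hHcont : Continuous H := by
    have h1 : Continuous fun y : EuclideanSpace ℝ (Fin N) => ‖y‖ ^ p :=
      continuous_norm.rpow_const (fun y => Or.inr hp0.le)
    have h2 : Continuous fun y : EuclideanSpace ℝ (Fin N) => φ ‖y‖ :=
      hφc.comp_continuous continuous_norm fun y => norm_nonneg y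
    exact h1.mul h2
  -- value of ∫ H
  have hval : (∫ y, H y) = ωN * ∫ r in Ioi (0:ℝ), r ^ (-2 * κ - 1) * φ r := by
    rw [show (∫ y, H y) = ∫ y : EuclideanSpace ℝ (Fin N), g0 ‖y‖ from rfl,
      MeasureTheory.integral_fun_norm_addHaar volume g0]
    simp only [hNfin, nsmul_eq_mul, smul_eq_mul]
    rw [setIntegral_congr_fun measurableSet_Ioi key, hω]
    rw [measureReal_def]
    ring
  -- change of variables for each t > 0
  have hmain : ∀ t ∈ Ioi (0:ℝ),
      (∫ x, ‖x‖ ^ p * v x t * f x) = B * ∫ y, H y * f (Real.sqrt t • y) := by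
    intro t ht
    have ht0 : 0 < t := ht
    have hst : 0 < Real.sqrt t := Real.sqrt_pos.2 ht0
    set F : EuclideanSpace ℝ (Fin N) → ℝ :=
      fun x => ‖x‖ ^ p * φ (‖x‖ / Real.sqrt t) * f x with hF
    have e1 : (∫ x, ‖x‖ ^ p * v x t * f x) = B * t ^ κ * ∫ x, F x := by
      rw [← MeasureTheory.integral_const_mul]
      congr 1
      funext x
      rw [hv x t ht0, hF]
      ring
    have e2 : (∫ y, F (Real.sqrt t • y)) = ((Real.sqrt t) ^ N)⁻¹ * ∫ x, F x := by
      have := MeasureTheory.Measure.integral_comp_smul_of_nonneg volume F (Real.sqrt t)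
        (hR := hst.le)
      simpa [hNfin, smul_eq_mul] using this
    have e3 : (∫ x, F x) = (Real.sqrt t) ^ N * ∫ y, F (Real.sqrt t • y) := by
      rw [e2, ← mul_assoc, mul_inv_cancel₀ (pow_ne_zero _ hst.ne'), one_mul]
    have e4 : ∀ y, F (Real.sqrt t • y) = (Real.sqrt t) ^ p * (H y * f (Real.sqrt t • y)) := by
      intro y
      have hn : ‖Real.sqrt t • y‖ = Real.sqrt t * ‖y‖ := by
        rw [norm_smul, Real.norm_eq_abs, abs_of_nonneg hst.le]
      simp only [hF, hH, hg0, hn]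
      rw [Real.mul_rpow hst.le (norm_nonneg y),
        show Real.sqrt t * ‖y‖ / Real.sqrt t = ‖y‖ by field_simp]
      ring
    have e5 : t ^ κ * ((Real.sqrt t) ^ N * (Real.sqrt t) ^ p) = 1 := by
      rw [← Real.rpow_natCast (Real.sqrt t) N, ← Real.rpow_add hst,
        Real.sqrt_eq_rpow]
      rw [← Real.rpow_mul ht0.le, ← Real.rpow_add ht0,
        show κ + 1 / 2 * ((N : ℝ) + p) = 0 by rw [hp]; ring, Real.rpow_zero]
    calc (∫ x, ‖x‖ ^ p * v x t * f x)
        = B * t ^ κ * ((Real.sqrt t) ^ N * ∫ y, F (Real.sqrt t • y)) := by rw [e1, ← e3]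
      _ = B * t ^ κ * ((Real.sqrt t) ^ N *
            ((Real.sqrt t) ^ p * ∫ y, H y * f (Real.sqrt t • y))) := by
          congr 2
          rw [← MeasureTheory.integral_const_mul]
          exact integral_congr_ae (Eventually.of_forall e4)
      _ = B * (t ^ κ * ((Real.sqrt t) ^ N * (Real.sqrt t) ^ p))
            * ∫ y, H y * f (Real.sqrt t • y) := by ring
      _ = B * ∫ y, H y * f (Real.sqrt t • y) := by rw [e5]; ring
  -- dominated convergence
  have hlim : Tendsto (fun t => ∫ y, H y * f (Real.sqrt t • y)) (𝓝[>] (0:ℝ))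
      (𝓝 (∫ y, H y * f 0)) := by
    apply tendsto_integral_filter_of_dominated_convergence (fun y => H y * K)
    · exact Eventually.of_forall fun t =>
        (hHcont.mul (hf.comp (continuous_const_smul (Real.sqrt t)))).aestronglyMeasurable
    · refine Eventually.of_forall fun t => Eventually.of_forall fun y => ?_
      rw [Real.norm_eq_abs, abs_mul, abs_of_nonneg (hHnn y)]
      exact mul_le_mul_of_nonneg_left (hK _) (hHnn y)
    · exact hHint.mul_const K
    · refine Eventually.of_forall fun y => ?_
      have hsm : Tendsto (fun t : ℝ => Real.sqrt t • y) (𝓝[>] (0:ℝ))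
          (𝓝 (0 : EuclideanSpace ℝ (Fin N))) := by
        have hc : Continuous fun s : ℝ => Real.sqrt s • y :=
          Continuous.smul Real.continuous_sqrt continuous_const
        have h0 := hc.tendsto 0
        simp only [Real.sqrt_zero, zero_smul] at h0
        exact h0.mono_left nhdsWithin_le_nhds
      exact tendsto_const_nhds.mul ((hf.tendsto 0).comp hsm)
  have hval2 : B * ∫ y, H y * f 0 = M₁ * f 0 := by
    rw [MeasureTheory.integral_mul_const, hval, hM₁]; ring
  have final : Tendsto (fun t => B * ∫ y, H y * f (Real.sqrt t • y)) (𝓝[>] (0:ℝ))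
      (𝓝 (M₁ * f 0)) := hval2 ▸ hlim.const_mul B
  exact final.congr' (eventuallyEq_of_mem self_mem_nhdsWithin fun t ht => (hmain t ht).symm)
end
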